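/- Let Z be an (n+1)×(m+1) matrix of rank at most k over a field, and suppose the top left k×k minor of Z vanishes. Then one of the following holds: the k×k minors formed from the first k rows of Z all vanish, or the k×k minors formed from the first k columns of Z all vanish (where k < min{n+1,m+1}). -/

import Mathlib

open Matrix


/-- Let `Z` be an `(n+1) × (m+1)` matrix of rank at most `k` over a
field, with `k < min (n+1) (m+1)`, and suppose the top-left `k × k` minor of `Z`
vanishes. Then either all `k × k` minors formed from the first `k` rows of `Z` vanish,
or all `k × k` minors formed from the first `k` columns of `Z` vanish. -/
theorem row_minors_vanish_or_col_minors_vanish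
    {K : Type*} [Field K] {n m k : ℕ} (hk : k < min (n + 1) (m + 1))
    (Z : Matrix (Fin (n + 1)) (Fin (m + 1)) K)
    (hrank : Z.rank ≤ k)
    (hdet : (Z.submatrix (Fin.castLE (by omega)) (Fin.castLE (by omega)) :
      Matrix (Fin k) (Fin k) K).det = 0) :
    (∀ c : Fin k → Fin (m + 1),
      (Z.submatrix (Fin.castLE (by omega : k ≤ n + 1)) c).det = 0) ∨
    (∀ r : Fin k → Fin (n + 1),
      (Z.submatrix r (Fin.castLE (by omega : k ≤ m + 1))).det = 0) := by
  by_contra hcon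
  push_neg at hcon
  obtain ⟨⟨c, hc⟩, ⟨r, hr⟩⟩ := hcon
  have hkn : k ≤ n + 1 := by omega
  have hkm : k ≤ m + 1 := by omega
  -- the first k columns of Z are linearly independent
  have h1 : LinearIndependent K (fun j : Fin k => Zᵀ (Fin.castLE hkm j)) := by
    have h0 : LinearIndependent K (fun j : Fin k => (Z.submatrix r (Fin.castLE hkm))ᵀ j) :=
      Matrix.linearIndependent_cols_iff_isUnit.mpr
        ((Matrix.isUnit_iff_isUnit_det _).mpr (isUnit_iff_ne_zero.mpr hr))
    have he : (fun j : Fin k => (Z.submatrix r (Fin.castLE hkm))ᵀ j)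
        = (LinearMap.funLeft K K r) ∘ (fun j : Fin k => Zᵀ (Fin.castLE hkm j)) := by
      ext j i; rfl
    rw [he] at h0
    exact h0.of_comp _
  have hfin1 : Module.finrank K
      (Submodule.span K (Set.range (fun j : Fin k => Zᵀ (Fin.castLE hkm j)))) = k := by
    rw [finrank_span_eq_card h1, Fintype.card_fin]
  -- the first k columns span the whole column space
  have hsub : Submodule.span K (Set.range (fun j : Fin k => Zᵀ (Fin.castLE hkm j)))
      ≤ Submodule.span K (Set.range Zᵀ) :=
    Submodule.span_mono (by rintro _ ⟨j, rfl⟩; exact ⟨_, rfl⟩)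
  have hZr : Module.finrank K (Submodule.span K (Set.range Zᵀ)) ≤ k := by
    exact (Matrix.rank_eq_finrank_span_cols (A := Z)).symm.le.trans hrank
  have heq : Submodule.span K (Set.range (fun j : Fin k => Zᵀ (Fin.castLE hkm j)))
      = Submodule.span K (Set.range Zᵀ) :=
    Submodule.eq_of_le_of_finrank_le hsub (hZr.trans hfin1.ge)
  -- restriction to the first k rows
  set φ : (Fin (n + 1) → K) →ₗ[K] (Fin k → K) := LinearMap.funLeft K K (Fin.castLE hkn) with hφ
  -- columns of the top-left k×k block
  set B : Matrix (Fin k) (Fin k) K := Z.submatrix (Fin.castLE hkn) (Fin.castLE hkm) with hB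
  have hBcol : ∀ j : Fin k, Bᵀ j = φ (Zᵀ (Fin.castLE hkm j)) := fun j => rfl
  -- each column of the selected submatrix lies in the span of the columns of B
  have hmem : ∀ j : Fin k, (Z.submatrix (Fin.castLE hkn) c)ᵀ j
      ∈ Submodule.span K (Set.range Bᵀ) := by
    intro j
    have h2 : Zᵀ (c j) ∈ Submodule.span K
        (Set.range (fun j : Fin k => Zᵀ (Fin.castLE hkm j))) := by
      rw [heq]; exact Submodule.subset_span ⟨c j, rfl⟩
    have h3 : φ (Zᵀ (c j)) ∈ Submodule.map φ
        (Submodule.span K (Set.range (fun j : Fin k => Zᵀ (Fin.castLE hkm j)))) :=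
      Submodule.mem_map_of_mem h2
    rw [Submodule.map_span, ← Set.range_comp] at h3
    have hcomp : (φ ∘ fun j : Fin k => Zᵀ (Fin.castLE hkm j)) = Bᵀ := by
      ext j i; rfl
    rw [hcomp] at h3
    exact h3
  -- columns of the selected submatrix are linearly independent
  have h4 : LinearIndependent K (fun j : Fin k => (Z.submatrix (Fin.castLE hkn) c)ᵀ j) :=
    Matrix.linearIndependent_cols_iff_isUnit.mpr
      ((Matrix.isUnit_iff_isUnit_det _).mpr (isUnit_iff_ne_zero.mpr hc))
  -- hence the span of the columns of B has dimension at least k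
  have h5 : Submodule.span K (Set.range (fun j : Fin k => (Z.submatrix (Fin.castLE hkn) c)ᵀ j))
      ≤ Submodule.span K (Set.range Bᵀ) := by
    rw [Submodule.span_le]; rintro _ ⟨j, rfl⟩; exact hmem j
  have h6 : k ≤ Module.finrank K (Submodule.span K (Set.range Bᵀ)) := by
    have := Submodule.finrank_mono (R := K) h5
    rwa [finrank_span_eq_card h4, Fintype.card_fin] at this
  have h7 : Module.finrank K (Submodule.span K (Set.range Bᵀ)) ≤ k := by
    have := finrank_range_le_card (R := K) Bᵀ
    simp only [Fintype.card_fin] at this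
    exact this
  -- so the columns of B are linearly independent, contradicting det B = 0
  have h8 : LinearIndependent K (fun j : Fin k => Bᵀ j) := by
    rw [linearIndependent_iff_card_eq_finrank_span, Fintype.card_fin]
    exact le_antisymm h6 h7
  have h9 : IsUnit B.det := (Matrix.isUnit_iff_isUnit_det _).mp
    (Matrix.linearIndependent_cols_iff_isUnit.mp h8)
  rw [hB] at h9
  exact h9.ne_zero hdet
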